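/- Every tailed derivation of 𝔰𝔩_2(ℂ) is an inner derivation; in particular TDer(𝔰𝔩_2(ℂ)) = Der(𝔰𝔩_2(ℂ)) is three-dimensional. -/

import Mathlib

set_option maxHeartbeats 1000000

open LieAlgebra.SpecialLinear Matrix

namespace TailedSl2Aux

lemma mem_sl (A : Matrix (Fin 2) (Fin 2) ℂ) (h : A.trace = 0) : A ∈ sl (Fin 2) ℂ := h

lemma sl_trace (y : sl (Fin 2) ℂ) : y.val 0 0 + y.val 1 1 = 0 := by
  have : y.val.trace = 0 := y.2
  rwa [Matrix.trace_fin_two] at this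

noncomputable def Em : sl (Fin 2) ℂ := ⟨!![0,1;0,0], mem_sl _ (by norm_num [Matrix.trace_fin_two])⟩
noncomputable def Fm : sl (Fin 2) ℂ := ⟨!![0,0;1,0], mem_sl _ (by norm_num [Matrix.trace_fin_two])⟩
noncomputable def Hm : sl (Fin 2) ℂ := ⟨!![1,0;0,-1], mem_sl _ (by norm_num [Matrix.trace_fin_two])⟩

@[simp] lemma Em_val : (Em.val : Matrix (Fin 2) (Fin 2) ℂ) = !![0,1;0,0] := rfl
@[simp] lemma Fm_val : (Fm.val : Matrix (Fin 2) (Fin 2) ℂ) = !![0,0;1,0] := rfl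
@[simp] lemma Hm_val : (Hm.val : Matrix (Fin 2) (Fin 2) ℂ) = !![1,0;0,-1] := rfl

lemma bracket_val (A B : sl (Fin 2) ℂ) :
    (⁅A,B⁆ : sl (Fin 2) ℂ).val = A.val * B.val - B.val * A.val := rfl
lemma val_smul (c : ℂ) (x : sl (Fin 2) ℂ) : (c • x).val = c • x.val := rfl
lemma val_add (x y : sl (Fin 2) ℂ) : (x + y).val = x.val + y.val := rfl
lemma val_sub (x y : sl (Fin 2) ℂ) : (x - y).val = x.val - y.val := rfl
lemma val_zero : ((0 : sl (Fin 2) ℂ)).val = 0 := rfl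

lemma EF : ⁅Em, Fm⁆ = Hm := by
  apply Subtype.ext; rw [bracket_val]
  ext i j; fin_cases i <;> fin_cases j <;> norm_num [Matrix.mul_apply, Fin.sum_univ_two]

lemma HE : ⁅Hm, Em⁆ = (2:ℂ) • Em := by
  apply Subtype.ext; rw [bracket_val, val_smul]
  ext i j; fin_cases i <;> fin_cases j <;> norm_num [Matrix.mul_apply, Fin.sum_univ_two]

lemma HF : ⁅Hm, Fm⁆ = (-2:ℂ) • Fm := by
  apply Subtype.ext; rw [bracket_val, val_smul]
  ext i j; fin_cases i <;> fin_cases j <;> norm_num [Matrix.mul_apply, Fin.sum_univ_two]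

lemma FE : ⁅Fm, Em⁆ = -Hm := by rw [← lie_skew, EF]

lemma EH : ⁅Em, Hm⁆ = -((2:ℂ) • Em) := by rw [← lie_skew, HE]

lemma FH : ⁅Fm, Hm⁆ = -((-2:ℂ) • Fm) := by rw [← lie_skew, HF]

lemma decomp (y : sl (Fin 2) ℂ) : y = y.val 0 1 • Em + y.val 1 0 • Fm + y.val 0 0 • Hm := by
  apply Subtype.ext
  rw [val_add, val_add, val_smul, val_smul, val_smul]
  ext i j; fin_cases i <;> fin_cases j <;> simp
  linear_combination sl_trace y

lemma sl_ext {x y : sl (Fin 2) ℂ} (h00 : x.val 0 0 = y.val 0 0) (h01 : x.val 0 1 = y.val 0 1)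
    (h10 : x.val 1 0 = y.val 1 0) : x = y := by
  apply Subtype.ext
  ext i j; fin_cases i <;> fin_cases j
  · exact h00
  · exact h01
  · exact h10
  · show x.val 1 1 = y.val 1 1
    have hx := sl_trace x; have hy := sl_trace y
    linear_combination hx - hy - h00

lemma linearmap_ext_basis {D1 D2 : sl (Fin 2) ℂ →ₗ[ℂ] sl (Fin 2) ℂ}
    (hE : D1 Em = D2 Em) (hF : D1 Fm = D2 Fm) (hH : D1 Hm = D2 Hm) (y : sl (Fin 2) ℂ) :
    D1 y = D2 y := by
  conv_lhs => rw [decomp y]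
  conv_rhs => rw [decomp y]
  rw [map_add, map_add, LinearMap.map_smul, LinearMap.map_smul, LinearMap.map_smul,
    map_add, map_add, LinearMap.map_smul, LinearMap.map_smul, LinearMap.map_smul, hE, hF, hH]

theorem main_aux (D : sl (Fin 2) ℂ →ₗ[ℂ] sl (Fin 2) ℂ) (d : sl (Fin 2) ℂ →ₗ[ℂ] ℂ)
    (h : ∀ y z : sl (Fin 2) ℂ, D ⁅y, z⁆ = ⁅D y, z⁆ + ⁅y, D z⁆ + d z • y - d y • z) :
    d = 0 ∧ ∃ w : sl (Fin 2) ℂ, ∀ y, D y = ⁅w, y⁆ := by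
  have e1 := h Em Fm; rw [EF] at e1
  have e2 := h Hm Em; rw [HE, LinearMap.map_smul] at e2
  have e3 := h Hm Fm; rw [HF, LinearMap.map_smul] at e3
  have P1 := fun i j => congrArg (fun X : sl (Fin 2) ℂ => X.val i j) e1
  have P2 := fun i j => congrArg (fun X : sl (Fin 2) ℂ => X.val i j) e2
  have P3 := fun i j => congrArg (fun X : sl (Fin 2) ℂ => X.val i j) e3
  simp only [val_add, val_sub, val_smul, bracket_val, Matrix.add_apply, Matrix.sub_apply,
    Matrix.smul_apply, Matrix.mul_apply, Fin.sum_univ_two, Em_val, Fm_val, Hm_val,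
    smul_eq_mul] at P1 P2 P3
  have t_e := sl_trace (D Em)
  have t_f := sl_trace (D Fm)
  have t_h := sl_trace (D Hm)
  have q100 := P1 0 0; have q101 := P1 0 1; have q110 := P1 1 0
  have q200 := P2 0 0; have q201 := P2 0 1; have q210 := P2 1 0
  have q300 := P3 0 0; have q301 := P3 0 1; have q310 := P3 1 0
  norm_num at q100 q101 q110 q200 q201 q210 q300 q301 q310
  have hr : d Hm = 0 := by linear_combination (q201 + q310) / 2
  have hq : d Fm = 0 := by linear_combination -(q101 + q300 + t_f) / 2
  have hp : d Em = 0 := by linear_combination (q110 - q200 + t_e) / 2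
  have ha10 : (D Em).val 1 0 = 0 := by linear_combination q210 / 4
  have hb01 : (D Fm).val 0 1 = 0 := by linear_combination -q301 / 4
  have hc00 : (D Hm).val 0 0 = 0 := by linear_combination (t_h - q201 + hr) / 2
  have hc01 : (D Hm).val 0 1 = -2 * (D Fm).val 0 0 := by linear_combination -q300 - hq
  have hc10 : (D Hm).val 1 0 = -2 * (D Em).val 0 0 := by linear_combination q200 + hp
  have hb10 : (D Fm).val 1 0 = -(D Em).val 0 1 := by linear_combination hc00 - q100
  have hd : d = 0 := by
    ext y
    conv_lhs => rw [decomp y]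
    simp [hp, hq, hr]
  refine ⟨hd, ⟨(D Fm).val 0 0 • Em + (-(D Em).val 0 0) • Fm + ((D Em).val 0 1/2) • Hm, ?_⟩⟩
  have hwE : D Em = ⁅(D Fm).val 0 0 • Em + (-(D Em).val 0 0) • Fm + ((D Em).val 0 1/2) • Hm, Em⁆ := by
    conv_lhs => rw [decomp (D Em)]
    rw [ha10]
    simp only [add_lie, smul_lie, lie_self, smul_zero, zero_add, HE, FE]
    module
  have hwF : D Fm = ⁅(D Fm).val 0 0 • Em + (-(D Em).val 0 0) • Fm + ((D Em).val 0 1/2) • Hm, Fm⁆ := by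
    conv_lhs => rw [decomp (D Fm)]
    rw [hb01, hb10]
    simp only [add_lie, smul_lie, lie_self, smul_zero, add_zero, EF, HF]
    module
  have hwH : D Hm = ⁅(D Fm).val 0 0 • Em + (-(D Em).val 0 0) • Fm + ((D Em).val 0 1/2) • Hm, Hm⁆ := by
    conv_lhs => rw [decomp (D Hm)]
    rw [hc00, hc01, hc10]
    simp only [add_lie, smul_lie, lie_self, smul_zero, add_zero, EH, FH]
    module
  intro y
  have key : D y = (LieAlgebra.ad ℂ (sl (Fin 2) ℂ)
      ((D Fm).val 0 0 • Em + (-(D Em).val 0 0) • Fm + ((D Em).val 0 1/2) • Hm)) y :=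
    linearmap_ext_basis (by rw [LieAlgebra.ad_apply]; exact hwE)
      (by rw [LieAlgebra.ad_apply]; exact hwF)
      (by rw [LieAlgebra.ad_apply]; exact hwH) y
  rwa [LieAlgebra.ad_apply] at key

noncomputable def slBasis : Module.Basis (Fin 3) ℂ (sl (Fin 2) ℂ) := by
  refine Module.Basis.mk (v := ![Em, Fm, Hm]) ?_ ?_
  · rw [Fintype.linearIndependent_iff]
    intro g hg
    rw [Fin.sum_univ_three] at hg
    have P := fun i j => congrArg (fun X : sl (Fin 2) ℂ => X.val i j) hg
    simp only [Matrix.cons_val_zero, Matrix.cons_val_one, Matrix.cons_val_two, Matrix.tail_cons, Matrix.head_cons, val_add, val_smul,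
      Matrix.add_apply, Matrix.smul_apply, Em_val, Fm_val, Hm_val, val_zero, Matrix.zero_apply,
      smul_eq_mul] at P
    have h0 := P 0 1; have h1 := P 1 0; have h2 := P 0 0
    norm_num at h0 h1 h2
    intro i; fin_cases i <;> simpa
  · rw [top_le_iff, eq_top_iff]
    intro y _
    rw [decomp y]
    exact add_mem (add_mem (Submodule.smul_mem _ _ (Submodule.subset_span ⟨0, rfl⟩))
      (Submodule.smul_mem _ _ (Submodule.subset_span ⟨1, rfl⟩)))
      (Submodule.smul_mem _ _ (Submodule.subset_span ⟨2, rfl⟩))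

lemma finrank_sl2 : Module.finrank ℂ (sl (Fin 2) ℂ) = 3 := by
  rw [Module.finrank_eq_card_basis slBasis, Fintype.card_fin]

lemma ad_bijective : Function.Bijective (LieDerivation.ad ℂ (sl (Fin 2) ℂ)) := by
  constructor
  · intro x y hxy
    have h : ∀ z, (⁅x, z⁆ : sl (Fin 2) ℂ) = ⁅y, z⁆ := by
      intro z
      have := congrArg (fun Dd : LieDerivation ℂ (sl (Fin 2) ℂ) (sl (Fin 2) ℂ) => Dd z) hxy
      simpa using this
    have PE := fun i j => congrArg (fun X : sl (Fin 2) ℂ => X.val i j) (h Em)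
    have PF := fun i j => congrArg (fun X : sl (Fin 2) ℂ => X.val i j) (h Fm)
    simp only [bracket_val, Matrix.sub_apply, Matrix.mul_apply, Fin.sum_univ_two,
      Em_val, Fm_val] at PE PF
    have u1 := PE 0 1; have u2 := PE 1 1; have u3 := PF 0 0
    norm_num at u1 u2 u3
    have tx := sl_trace x; have ty := sl_trace y
    apply sl_ext
    · linear_combination (u1 + tx - ty) / 2
    · linear_combination u3
    · linear_combination u2
  · intro Dd
    obtain ⟨-, w, hw⟩ := main_aux Dd.toLinearMap 0 (by
      intro y z
      simp only [zero_smul, LinearMap.zero_apply, sub_zero, add_zero]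
      exact (Dd.apply_lie_eq_add y z).trans (add_comm _ _))
    exact ⟨w, LieDerivation.ext fun y => by simpa using (hw y).symm⟩

end TailedSl2Aux

open TailedSl2Aux in
/-- every tailed derivation of `𝔰𝔩₂(ℂ)` is an inner derivation (and its
tail is zero); in particular `TDer(𝔰𝔩₂(ℂ)) = Der(𝔰𝔩₂(ℂ))` is three-dimensional. -/
theorem tailedDer_sl2_inner :
    (∀ (D : LieAlgebra.SpecialLinear.sl (Fin 2) ℂ →ₗ[ℂ]
            LieAlgebra.SpecialLinear.sl (Fin 2) ℂ)
       (d : LieAlgebra.SpecialLinear.sl (Fin 2) ℂ →ₗ[ℂ] ℂ),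
      (∀ y z : LieAlgebra.SpecialLinear.sl (Fin 2) ℂ,
        D ⁅y, z⁆ = ⁅D y, z⁆ + ⁅y, D z⁆ + d z • y - d y • z) →
      d = 0 ∧ ∃ w : LieAlgebra.SpecialLinear.sl (Fin 2) ℂ, ∀ y, D y = ⁅w, y⁆) ∧
    Module.finrank ℂ
      (LieDerivation ℂ (LieAlgebra.SpecialLinear.sl (Fin 2) ℂ)
        (LieAlgebra.SpecialLinear.sl (Fin 2) ℂ)) = 3 := by
  constructor
  · exact fun D d h => main_aux D d h
  · have e := LinearEquiv.ofBijective ((LieDerivation.ad ℂ (sl (Fin 2) ℂ)).toLinearMap)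
      ad_bijective
    rw [← e.finrank_eq, finrank_sl2]
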